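/- Let M ≥ 2, n ≥ 1, and γ ∈ Γ_{M,n}. Define R = {i : ∃ j, 0 < γ(i,j) < 1} and C = {j : ∃ i, 0 < γ(i,j) < 1}. Then C^B_M(γ) · perm(γ̂_{R,C}) = Σ_{σ ∈ S_n(γ)} C^B_{M-1}(γ_σ), where C^B_M(γ) = (M!)^{2n−n²} · Π_{i,j} (M − M·γ(i,j))! / (M·γ(i,j))!, γ̂_{R,C}(i,j) = γ(i,j)·(1−γ(i,j)) / (Π_{(i',j') ∈ R×C} (1−γ(i',j')))^{1/|R|} for (i,j) ∈ R×C (with perm(γ̂_{R,C}) := 1 if R is empty), S_n(γ) = {σ : γ(i,σ(i)) > 0 ∀i}, and γ_σ = (1/(M-1))·(M·γ − P_σ). -/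

import Mathlib

open scoped BigOperators

/-- The permanent of an `n × n` real matrix. -/
noncomputable def perm {n : ℕ} (γ : Matrix (Fin n) (Fin n) ℝ) : ℝ :=
  ∑ σ : Equiv.Perm (Fin n), ∏ i, γ i (σ i)

/-- Doubly stochastic: non-negative entries, row sums and column sums equal 1. -/
def IsDoublyStochastic {n : ℕ} (γ : Matrix (Fin n) (Fin n) ℝ) : Prop :=
  (∀ i j, 0 ≤ γ i j) ∧ (∀ i, ∑ j, γ i j = 1) ∧ (∀ j, ∑ i, γ i j = 1)

/-- The permutation matrix associated with `σ`. -/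
def Pmat {n : ℕ} (σ : Equiv.Perm (Fin n)) : Matrix (Fin n) (Fin n) ℝ :=
  fun i j => if σ i = j then 1 else 0

/-- `γ ∈ Γ_{M,n}`: doubly stochastic with all entries integer multiples of `1/M`. -/
def MemGamma {n : ℕ} (M : ℕ) (γ : Matrix (Fin n) (Fin n) ℝ) : Prop :=
  IsDoublyStochastic γ ∧ ∀ i j, ∃ k : ℕ, γ i j = (k : ℝ) / M

/-- `C_M(γ)`: the number of `M`-tuples of permutations whose permutation matrices
average to `γ`. -/
noncomputable def CM {n : ℕ} (M : ℕ) (γ : Matrix (Fin n) (Fin n) ℝ) : ℕ :=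
  Nat.card {σs : Fin M → Equiv.Perm (Fin n) // γ = (M : ℝ)⁻¹ • ∑ m, Pmat (σs m)}

/-- `θ^{M·γ} = ∏_{i,j} θ(i,j)^{M·γ(i,j)}` (the exponents are natural numbers for
`γ ∈ Γ_{M,n}`). -/
noncomputable def matPow {n : ℕ} (M : ℕ) (θ γ : Matrix (Fin n) (Fin n) ℝ) : ℝ :=
  ∏ i, ∏ j, θ i j ^ (⌊(M : ℝ) * γ i j⌋₊)

open scoped Classical

/-- `γ_σ = (1/(M-1))·(M·γ − P_σ)`. -/
noncomputable def gammaPeel {n : ℕ} (M : ℕ) (γ : Matrix (Fin n) (Fin n) ℝ)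
    (σ : Equiv.Perm (Fin n)) : Matrix (Fin n) (Fin n) ℝ :=
  ((M : ℝ) - 1)⁻¹ • ((M : ℝ) • γ - Pmat σ)

/-- `C^B_M(γ) = (M!)^{2n−n²} · ∏_{i,j} (M − M·γ(i,j))! / (M·γ(i,j))!`. -/
noncomputable def CB {n : ℕ} (M : ℕ) (γ : Matrix (Fin n) (Fin n) ℝ) : ℝ :=
  (M.factorial : ℝ) ^ (2 * (n : ℤ) - (n : ℤ) ^ 2) *
    ∏ i, ∏ j, ((M - ⌊(M : ℝ) * γ i j⌋₊).factorial : ℝ) / ((⌊(M : ℝ) * γ i j⌋₊).factorial : ℝ)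

/-- Row indices of rows of `γ` containing a fractional entry. -/
noncomputable def fracRows {n : ℕ} (γ : Matrix (Fin n) (Fin n) ℝ) : Finset (Fin n) :=
  Finset.univ.filter fun i => ∃ j, 0 < γ i j ∧ γ i j < 1

/-- Column indices of columns of `γ` containing a fractional entry. -/
noncomputable def fracCols {n : ℕ} (γ : Matrix (Fin n) (Fin n) ℝ) : Finset (Fin n) :=
  Finset.univ.filter fun j => ∃ i, 0 < γ i j ∧ γ i j < 1

/-- The matrix `γ̂_{R,C}` on the fractional rows/columns of `γ`. -/
noncomputable def gammaHat {n : ℕ} (γ : Matrix (Fin n) (Fin n) ℝ)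
    (i j : Fin n) : ℝ :=
  γ i j * (1 - γ i j) /
    (∏ i' ∈ fracRows γ, ∏ j' ∈ fracCols γ, (1 - γ i' j')) ^ ((1 : ℝ) / (fracRows γ).card)

/-- The permanent of a matrix restricted to index sets `R` (rows) and `C` (columns):
the sum over all bijections `R → C` of the products of the corresponding entries.
It equals `1` when `R` and `C` are empty. -/
noncomputable def permOn {n : ℕ} (A : Matrix (Fin n) (Fin n) ℝ)
    (R C : Finset (Fin n)) : ℝ :=
  ∑ e : {i // i ∈ R} ≃ {j // j ∈ C}, ∏ i : {i // i ∈ R}, A i.1 (e i).1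


section Aux

variable {n M : ℕ} {γ : Matrix (Fin n) (Fin n) ℝ}

lemma ds_le_one (hd : IsDoublyStochastic γ) (i j : Fin n) : γ i j ≤ 1 := by
  have h := hd.2.1 i
  calc γ i j ≤ ∑ j', γ i j' :=
        Finset.single_le_sum (fun j' _ => hd.1 i j') (Finset.mem_univ j)
    _ = 1 := h

lemma row_unique (hd : IsDoublyStochastic γ) {i j j' : Fin n} (h : γ i j = 1)
    (hne : j' ≠ j) : γ i j' = 0 := by
  have hsum := hd.2.1 i
  have h2 : γ i j + ∑ x ∈ Finset.univ.erase j, γ i x = 1 := by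
    rw [Finset.add_sum_erase _ _ (Finset.mem_univ j)]; exact hsum
  have h3 : ∑ x ∈ Finset.univ.erase j, γ i x = 0 := by rw [h] at h2; linarith
  have := (Finset.sum_eq_zero_iff_of_nonneg (fun x _ => hd.1 i x)).1 h3
  exact this j' (Finset.mem_erase.2 ⟨hne, Finset.mem_univ j'⟩)

lemma col_unique (hd : IsDoublyStochastic γ) {i j i' : Fin n} (h : γ i j = 1)
    (hne : i' ≠ i) : γ i' j = 0 := by
  have hsum := hd.2.2 j
  have h2 : γ i j + ∑ x ∈ Finset.univ.erase i, γ x j = 1 := by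
    rw [Finset.add_sum_erase _ (fun x => γ x j) (Finset.mem_univ i)]; exact hsum
  have h3 : ∑ x ∈ Finset.univ.erase i, γ x j = 0 := by rw [h] at h2; linarith
  have := (Finset.sum_eq_zero_iff_of_nonneg (fun x _ => hd.1 x j)).1 h3
  exact this i' (Finset.mem_erase.2 ⟨hne, Finset.mem_univ i'⟩)

lemma one_of_notR (hd : IsDoublyStochastic γ) {i : Fin n} (hi : i ∉ fracRows γ) :
    ∃ j, γ i j = 1 := by
  by_contra h
  push_neg at h
  have hz : ∀ j, γ i j = 0 := by
    intro j
    rcases lt_or_eq_of_le (hd.1 i j) with hp | he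
    · exfalso
      have hlt : ¬ γ i j < 1 := by
        intro hlt
        exact hi (Finset.mem_filter.2 ⟨Finset.mem_univ i, ⟨j, hp, hlt⟩⟩)
      exact h j (le_antisymm (ds_le_one hd i j) (not_lt.1 hlt))
    · exact he.symm
  have := hd.2.1 i
  rw [Finset.sum_eq_zero (fun j _ => hz j)] at this
  norm_num at this

lemma notR_of_one (hd : IsDoublyStochastic γ) {i j : Fin n} (h : γ i j = 1) :
    i ∉ fracRows γ := by
  simp only [fracRows, Finset.mem_filter, Finset.mem_univ, true_and]
  rintro ⟨j', hp, hlt⟩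
  rcases eq_or_ne j' j with rfl | hne
  · rw [h] at hlt; exact lt_irrefl _ hlt
  · rw [row_unique hd h hne] at hp; exact lt_irrefl _ hp

lemma notC_of_one (hd : IsDoublyStochastic γ) {i j : Fin n} (h : γ i j = 1) :
    j ∉ fracCols γ := by
  simp only [fracCols, Finset.mem_filter, Finset.mem_univ, true_and]
  rintro ⟨i', hp, hlt⟩
  rcases eq_or_ne i' i with rfl | hne
  · rw [h] at hlt; exact lt_irrefl _ hlt
  · rw [col_unique hd h hne] at hp; exact lt_irrefl _ hp

lemma one_of_notC (hd : IsDoublyStochastic γ) {j : Fin n} (hj : j ∉ fracCols γ) :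
    ∃ i, γ i j = 1 := by
  by_contra h
  push_neg at h
  have hz : ∀ i, γ i j = 0 := by
    intro i
    rcases lt_or_eq_of_le (hd.1 i j) with hp | he
    · exfalso
      have hlt : ¬ γ i j < 1 := by
        intro hlt
        exact hj (Finset.mem_filter.2 ⟨Finset.mem_univ j, ⟨i, hp, hlt⟩⟩)
      have h1 : γ i j = 1 := le_antisymm (ds_le_one hd i j) (not_lt.1 hlt)
      exact h i h1
    · exact he.symm
  have := hd.2.2 j
  rw [Finset.sum_eq_zero (fun i _ => hz i)] at this
  norm_num at this

lemma lt_one_of_memR (hd : IsDoublyStochastic γ) {i : Fin n} (hi : i ∈ fracRows γ)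
    (j : Fin n) : γ i j < 1 := by
  rcases lt_or_eq_of_le (ds_le_one hd i j) with h | h
  · exact h
  · exact absurd hi (notR_of_one hd h)

lemma zero_of_memR_notC (hd : IsDoublyStochastic γ) {i j : Fin n}
    (hi : i ∈ fracRows γ) (hj : j ∉ fracCols γ) : γ i j = 0 := by
  rcases lt_or_eq_of_le (hd.1 i j) with hp | he
  · exact absurd (Finset.mem_filter.2 ⟨Finset.mem_univ j,
      ⟨i, hp, lt_one_of_memR hd hi j⟩⟩) hj
  · exact he.symm

lemma floor_nat (hγ : MemGamma M γ) (hM : 0 < M) (i j : Fin n) :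
    ((⌊(M : ℝ) * γ i j⌋₊ : ℕ) : ℝ) = (M : ℝ) * γ i j := by
  obtain ⟨m, hm⟩ := hγ.2 i j
  have hM' : (M : ℝ) ≠ 0 := Nat.cast_ne_zero.2 hM.ne'
  rw [hm]
  rw [mul_div_cancel₀ _ hM']
  rw [Nat.floor_natCast]

end Aux

section Term

variable {n M : ℕ} {γ : Matrix (Fin n) (Fin n) ℝ}

lemma term_eq (hn : 1 ≤ n) (hM : 2 ≤ M) (hγ : MemGamma M γ) (σ : Equiv.Perm (Fin n))
    (hσ : ∀ i, 0 < γ i (σ i)) :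
    CB M γ * ∏ i : {i // i ∈ fracRows γ}, gammaHat γ i.1 (σ i.1)
      = CB (M - 1) (gammaPeel M γ σ) := by
  have hd := hγ.1
  set u : ℝ := (M : ℝ) with hu_def
  have hM0 : 0 < M := by omega
  have hu0 : (0:ℝ) < u := by rw [hu_def]; exact_mod_cast hM0
  have hune : u ≠ 0 := ne_of_gt hu0
  set k : Fin n → Fin n → ℕ := fun i j => ⌊(M : ℝ) * γ i j⌋₊ with hk_def
  have hk : ∀ i j, ((k i j : ℕ) : ℝ) = u * γ i j := fun i j => floor_nat hγ hM0 i j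
  have hkM : ∀ i j, k i j ≤ M := by
    intro i j
    have h1 : ((k i j : ℕ) : ℝ) ≤ (M : ℝ) := by
      rw [hk, ← hu_def]
      nlinarith [ds_le_one hd i j, hd.1 i j]
    exact_mod_cast h1
  have hk1 : ∀ i, 1 ≤ k i (σ i) := by
    intro i
    have h1 : (0:ℝ) < ((k i (σ i) : ℕ) : ℝ) := by
      rw [hk]; exact mul_pos hu0 (hσ i)
    have h2 : 0 < k i (σ i) := Nat.cast_pos.mp h1
    omega
  have hklt : ∀ i j, σ i ≠ j → k i j < M := by
    intro i j hne
    rcases lt_or_eq_of_le (hkM i j) with h | h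
    · exact h
    · exfalso
      have h1 : γ i j = 1 := by
        have h2 := hk i j
        rw [h] at h2
        have h3 : u * 1 = u * γ i j := by rw [mul_one, hu_def]; exact h2
        exact (mul_left_cancel₀ hune h3).symm
      have := row_unique hd h1 hne
      linarith [hσ i]
  set t : Fin n → Fin n → ℝ :=
    fun i j => if σ i = j then u * γ i j else (u * (1 - γ i j))⁻¹ with ht_def
  have hMcast : ((M - 1 : ℕ) : ℝ) = u - 1 := by
    rw [Nat.cast_sub (by omega : 1 ≤ M)]; simp [hu_def]
  have hne1 : u - 1 ≠ 0 := by
    rw [hu_def]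
    have : (2:ℝ) ≤ (M:ℝ) := by exact_mod_cast hM
    intro h; rw [sub_eq_zero] at h; rw [h] at this; linarith
  have hent : ∀ i j, ((M - 1 : ℕ) : ℝ) * gammaPeel M γ σ i j
      = u * γ i j - (if σ i = j then 1 else 0) := by
    intro i j
    rw [hMcast]
    unfold gammaPeel Pmat
    simp only [Matrix.smul_apply, Matrix.sub_apply, Pi.sub_apply, Pi.smul_apply, smul_eq_mul]
    rw [← mul_assoc, mul_inv_cancel₀ hne1, one_mul, hu_def]
    rfl
  have hfloor : ∀ i j, ⌊((M - 1 : ℕ) : ℝ) * gammaPeel M γ σ i j⌋₊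
      = k i j - (if σ i = j then 1 else 0) := by
    intro i j
    by_cases hij : σ i = j
    · have hk1' : 1 ≤ k i j := hij ▸ hk1 i
      have e1 : ((M - 1 : ℕ) : ℝ) * gammaPeel M γ σ i j = ((k i j - 1 : ℕ) : ℝ) := by
        rw [hent i j, if_pos hij, Nat.cast_sub hk1', hk i j, Nat.cast_one]
      rw [e1, Nat.floor_natCast, if_pos hij]
    · have e1 : ((M - 1 : ℕ) : ℝ) * gammaPeel M γ σ i j = ((k i j : ℕ) : ℝ) := by
        rw [hent i j, if_neg hij, hk i j, sub_zero]
      rw [e1, Nat.floor_natCast, if_neg hij, Nat.sub_zero]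
  have hentry : ∀ i j,
      (((M - 1) - (k i j - (if σ i = j then 1 else 0))).factorial : ℝ)
        / ((k i j - (if σ i = j then 1 else 0)).factorial : ℝ)
      = (((M - k i j).factorial : ℝ) / ((k i j).factorial : ℝ)) * t i j := by
    intro i j
    by_cases hij : σ i = j
    · rw [if_pos hij]
      have h1 : 1 ≤ k i j := hij ▸ hk1 i
      have h2 : k i j ≤ M := hkM i j
      have e1 : (M - 1) - (k i j - 1) = M - k i j := by omega
      have e2 : (k i j).factorial = k i j * (k i j - 1).factorial :=
        (Nat.mul_factorial_pred (by omega)).symm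
      have ht1 : t i j = ((k i j : ℕ) : ℝ) := by simp [ht_def, hij, hk i j]
      rw [e1, ht1, e2]
      have hknz : ((k i j : ℕ) : ℝ) ≠ 0 := Nat.cast_ne_zero.2 (by omega)
      have hfz : (((k i j - 1).factorial : ℕ) : ℝ) ≠ 0 :=
        Nat.cast_ne_zero.2 (Nat.factorial_ne_zero _)
      push_cast
      field_simp
    · rw [if_neg hij, Nat.sub_zero]
      have h2 : k i j < M := hklt i j hij
      have e1 : (M - 1) - k i j = (M - k i j) - 1 := by omega
      have e2 : (M - k i j).factorial = (M - k i j) * ((M - k i j) - 1).factorial :=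
        (Nat.mul_factorial_pred (by omega)).symm
      have ht1 : t i j = (((M - k i j : ℕ) : ℕ) : ℝ)⁻¹ := by
        have : u * (1 - γ i j) = ((M - k i j : ℕ) : ℝ) := by
          rw [Nat.cast_sub (le_of_lt h2), hk i j, hu_def]; ring
        simp only [ht_def]
        rw [if_neg hij, this]
      rw [e1, ht1, e2]
      have hmknz : (((M - k i j : ℕ) : ℕ) : ℝ) ≠ 0 := Nat.cast_ne_zero.2 (by omega)
      have hfz : (((k i j).factorial : ℕ) : ℝ) ≠ 0 :=
        Nat.cast_ne_zero.2 (Nat.factorial_ne_zero _)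
      push_cast
      field_simp
  have h2n : u ^ ((2:ℤ) - (n:ℤ)) = u * u * (u⁻¹) ^ n := by
    rw [zpow_sub₀ hune, zpow_natCast, div_eq_mul_inv, ← inv_pow,
      show (2:ℤ) = ((2:ℕ):ℤ) by norm_num, zpow_natCast]
    ring
  have hrow : ∀ i, ∏ j, t i j = u ^ ((2:ℤ) - (n:ℤ)) *
      (if i ∈ fracRows γ then
        γ i (σ i) * (1 - γ i (σ i)) * ∏ j ∈ fracCols γ, (1 - γ i j)⁻¹ else 1) := by
    intro i
    by_cases hiR : i ∈ fracRows γ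
    · rw [if_pos hiR]
      have hlt1 : ∀ j, γ i j < 1 := lt_one_of_memR hd hiR
      have hx : ∀ j, (u * (1 - γ i j)) ≠ 0 := fun j =>
        ne_of_gt (mul_pos hu0 (by linarith [hlt1 j]))
      rw [← Finset.mul_prod_erase Finset.univ _ (Finset.mem_univ (σ i))]
      have ht1 : t i (σ i) = u * γ i (σ i) := by simp [ht_def]
      have ht2 : ∏ j ∈ Finset.univ.erase (σ i), t i j
          = ∏ j ∈ Finset.univ.erase (σ i), (u * (1 - γ i j))⁻¹ := by
        refine Finset.prod_congr rfl fun j hj => ?_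
        have hne := (Finset.mem_erase.1 hj).1
        simp [ht_def, (show ¬ σ i = j from fun h => hne h.symm)]
      have ht3 : (∏ j ∈ Finset.univ.erase (σ i), (u * (1 - γ i j))⁻¹)
            * (u * (1 - γ i (σ i)))⁻¹ = ∏ j, (u * (1 - γ i j))⁻¹ :=
        Finset.prod_erase_mul _ _ (Finset.mem_univ (σ i))
      have ht6 : ∏ j ∈ Finset.univ.erase (σ i), (u * (1 - γ i j))⁻¹
          = (∏ j, (u * (1 - γ i j))⁻¹) * (u * (1 - γ i (σ i))) := by
        rw [← ht3, mul_assoc, inv_mul_cancel₀ (hx (σ i)), mul_one]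
      have ht4 : ∏ j, (u * (1 - γ i j))⁻¹ = (u⁻¹) ^ n * ∏ j, (1 - γ i j)⁻¹ := by
        simp only [mul_inv]
        rw [Finset.prod_mul_distrib, Finset.prod_const, Finset.card_univ, Fintype.card_fin]
      have ht5 : ∏ j, (1 - γ i j)⁻¹ = ∏ j ∈ fracCols γ, (1 - γ i j)⁻¹ := by
        symm
        apply Finset.prod_subset (Finset.subset_univ _)
        intro j _ hj
        rw [zero_of_memR_notC hd hiR hj]
        norm_num
      rw [ht1, ht2, ht6, ht4, ht5, h2n]
      ring
    · rw [if_neg hiR, mul_one]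
      have h1 : γ i (σ i) = 1 := by
        rcases lt_or_eq_of_le (ds_le_one hd i (σ i)) with h | h
        · exact absurd (Finset.mem_filter.2 ⟨Finset.mem_univ i, ⟨σ i, hσ i, h⟩⟩) hiR
        · exact h
      rw [← Finset.mul_prod_erase Finset.univ _ (Finset.mem_univ (σ i))]
      have ht1 : t i (σ i) = u := by simp [ht_def, h1]
      have ht2 : ∏ j ∈ Finset.univ.erase (σ i), t i j = (u⁻¹) ^ (n - 1) := by
        have hconst : ∀ j ∈ Finset.univ.erase (σ i), t i j = u⁻¹ := by
          intro j hj
          have hne := (Finset.mem_erase.1 hj).1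
          have hz : γ i j = 0 := row_unique hd h1 hne
          simp [ht_def, hz, (show ¬ σ i = j from fun h => hne h.symm)]
        rw [Finset.prod_congr rfl hconst, Finset.prod_const,
          Finset.card_erase_of_mem (Finset.mem_univ _), Finset.card_univ, Fintype.card_fin]
      rw [ht1, ht2, h2n]
      have hsplit : (u⁻¹ : ℝ) ^ n = (u⁻¹) ^ (n - 1) * u⁻¹ := by
        conv_lhs => rw [show n = (n - 1) + 1 by omega]
        rw [pow_succ]
      rw [hsplit]
      field_simp
  have hT : (∏ i, ∏ j, t i j) = u ^ (2 * (n:ℤ) - (n:ℤ) ^ 2) *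
      ((∏ i ∈ fracRows γ, γ i (σ i) * (1 - γ i (σ i)))
        * (∏ i ∈ fracRows γ, ∏ j ∈ fracCols γ, (1 - γ i j))⁻¹) := by
    rw [Finset.prod_congr rfl (fun i _ => hrow i), Finset.prod_mul_distrib,
      Finset.prod_const, Finset.card_univ, Fintype.card_fin]
    have e1 : (u ^ ((2:ℤ) - (n:ℤ))) ^ n = u ^ (2 * (n:ℤ) - (n:ℤ) ^ 2) := by
      rw [← zpow_natCast (u ^ ((2:ℤ) - (n:ℤ))) n, ← zpow_mul]
      congr 1
      ring
    rw [e1, Finset.prod_ite_mem, Finset.univ_inter, ← Finset.prod_inv_distrib,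
      ← Finset.prod_mul_distrib]
    congr 1
    refine Finset.prod_congr rfl fun i _ => ?_
    rw [Finset.prod_inv_distrib]
  have hQ : (∏ i : {i // i ∈ fracRows γ}, gammaHat γ i.1 (σ i.1))
      = (∏ i ∈ fracRows γ, γ i (σ i) * (1 - γ i (σ i)))
        * (∏ i ∈ fracRows γ, ∏ j ∈ fracCols γ, (1 - γ i j))⁻¹ := by
    rw [Finset.prod_coe_sort (fracRows γ) (fun i => gammaHat γ i (σ i))]
    unfold gammaHat
    rw [Finset.prod_div_distrib, Finset.prod_const]
    rw [div_eq_mul_inv]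
    congr 2
    set P := ∏ i' ∈ fracRows γ, ∏ j' ∈ fracCols γ, (1 - γ i' j') with hP_def
    rcases Nat.eq_zero_or_pos (fracRows γ).card with hr | hr
    · have hR : fracRows γ = ∅ := Finset.card_eq_zero.mp hr
      simp [hP_def, hR]
    · have hP0 : (0:ℝ) < P := by
        rw [hP_def]
        refine Finset.prod_pos fun i hi => Finset.prod_pos fun j _ => ?_
        linarith [lt_one_of_memR hd hi j]
      rw [← Real.rpow_natCast (P ^ ((1:ℝ) / (fracRows γ).card)) (fracRows γ).card,
        ← Real.rpow_mul hP0.le, one_div,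
        inv_mul_cancel₀ (by exact_mod_cast hr.ne' : ((fracRows γ).card : ℝ) ≠ 0),
        Real.rpow_one]
  have hpeel : CB (M - 1) (gammaPeel M γ σ)
      = ((M - 1).factorial : ℝ) ^ (2 * (n:ℤ) - (n:ℤ) ^ 2) *
        ((∏ i, ∏ j, ((M - k i j).factorial : ℝ) / ((k i j).factorial : ℝ))
          * ∏ i, ∏ j, t i j) := by
    unfold CB
    have e : ∀ i ∈ (Finset.univ : Finset (Fin n)),
        (∏ j, (((M - 1) - ⌊((M - 1 : ℕ) : ℝ) * gammaPeel M γ σ i j⌋₊).factorial : ℝ)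
          / ((⌊((M - 1 : ℕ) : ℝ) * gammaPeel M γ σ i j⌋₊).factorial : ℝ))
        = ∏ j, ((((M - k i j).factorial : ℝ) / ((k i j).factorial : ℝ)) * t i j) := by
      intro i _
      refine Finset.prod_congr rfl fun j _ => ?_
      rw [hfloor i j]
      exact hentry i j
    rw [Finset.prod_congr rfl e]
    rw [Finset.prod_congr rfl
      (fun i (_ : i ∈ (Finset.univ : Finset (Fin n))) => Finset.prod_mul_distrib),
      Finset.prod_mul_distrib]
  have hCBM : CB M γ = ((M).factorial : ℝ) ^ (2 * (n:ℤ) - (n:ℤ) ^ 2) *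
      (∏ i, ∏ j, ((M - k i j).factorial : ℝ) / ((k i j).factorial : ℝ)) := rfl
  have hfac : ((M.factorial : ℝ)) ^ (2 * (n:ℤ) - (n:ℤ) ^ 2)
      = u ^ (2 * (n:ℤ) - (n:ℤ) ^ 2) * ((M - 1).factorial : ℝ) ^ (2 * (n:ℤ) - (n:ℤ) ^ 2) := by
    rw [← mul_zpow]
    congr 1
    rw [hu_def]
    exact_mod_cast (Nat.mul_factorial_pred hM0.ne').symm
  rw [hCBM, hQ, hpeel, hT, hfac]
  ring

end Term

theorem CB_recursion {n M : ℕ} (hn : 1 ≤ n) (hM : 2 ≤ M)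
    (γ : Matrix (Fin n) (Fin n) ℝ) (hγ : MemGamma M γ) :
    CB M γ * permOn (fun i j => gammaHat γ i j) (fracRows γ) (fracCols γ)
      = ∑ σ ∈ Finset.univ.filter (fun σ : Equiv.Perm (Fin n) => ∀ i, 0 < γ i (σ i)),
          CB (M - 1) (gammaPeel M γ σ) := by
  classical
  have hd := hγ.1
  have honer : ∀ i j, i ∉ fracRows γ → 0 < γ i j → γ i j = 1 := by
    intro i j hi hp
    rcases lt_or_eq_of_le (ds_le_one hd i j) with h | h
    · exact absurd (Finset.mem_filter.2 ⟨Finset.mem_univ i, ⟨j, hp, h⟩⟩) hi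
    · exact h
  have hex : ∀ i : {i // i ∉ fracRows γ}, ∃ j, γ i.1 j = 1 := fun i => one_of_notR hd i.2
  choose g hg using hex
  have hex2 : ∀ j : {j // j ∉ fracCols γ}, ∃ i, γ i j.1 = 1 := fun j => one_of_notC hd j.2
  choose g2 hg2 using hex2
  let φ : {i // i ∉ fracRows γ} ≃ {j // j ∉ fracCols γ} :=
    { toFun := fun i => ⟨g i, notC_of_one hd (hg i)⟩
      invFun := fun j => ⟨g2 j, notR_of_one hd (hg2 j)⟩
      left_inv := by
        intro i
        apply Subtype.ext
        have h1 := hg2 ⟨g i, notC_of_one hd (hg i)⟩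
        rcases eq_or_ne (g2 ⟨g i, notC_of_one hd (hg i)⟩) i.1 with h | h
        · exact h
        · exact absurd h1 (by rw [col_unique hd (hg i) h]; norm_num)
      right_inv := by
        intro j
        apply Subtype.ext
        have h1 := hg ⟨g2 j, notR_of_one hd (hg2 j)⟩
        rcases eq_or_ne (g ⟨g2 j, notR_of_one hd (hg2 j)⟩) j.1 with h | h
        · exact h
        · exact absurd h1 (by rw [row_unique hd (hg2 j) h]; norm_num) }
  let toP : ({i // i ∈ fracRows γ} ≃ {j // j ∈ fracCols γ}) → Equiv.Perm (Fin n) :=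
    fun e => ((Equiv.sumCompl (fun i => i ∈ fracRows γ)).symm.trans
      ((e.sumCongr φ).trans (Equiv.sumCompl (fun j => j ∈ fracCols γ))))
  have htoP_mem : ∀ e i (hi : i ∈ fracRows γ), toP e i = (e ⟨i, hi⟩).1 := by
    intro e i hi
    simp [toP, Equiv.sumCompl_symm_apply_of_pos hi]
  have htoP_not : ∀ e i (hi : i ∉ fracRows γ), toP e i = g ⟨i, hi⟩ := by
    intro e i hi
    simp [toP, φ, Equiv.sumCompl_symm_apply_of_neg hi]
  have hmemC : ∀ (σ : Equiv.Perm (Fin n)), (∀ i, 0 < γ i (σ i)) →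
      ∀ i : Fin n, i ∈ fracRows γ → σ i ∈ fracCols γ := by
    intro σ hσ i hi
    exact Finset.mem_filter.2 ⟨Finset.mem_univ _, ⟨i, hσ i, lt_one_of_memR hd hi (σ i)⟩⟩
  have hmemR : ∀ (σ : Equiv.Perm (Fin n)), (∀ i, 0 < γ i (σ i)) →
      ∀ j : Fin n, j ∈ fracCols γ → σ.symm j ∈ fracRows γ := by
    intro σ hσ j hj
    by_contra hR
    have h1 : γ (σ.symm j) (σ (σ.symm j)) = 1 := honer _ _ hR (hσ _)
    have h2 := notC_of_one hd h1
    rw [Equiv.apply_symm_apply] at h2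
    exact h2 hj
  let mkE : ∀ σ : Equiv.Perm (Fin n), (∀ i, 0 < γ i (σ i)) →
      ({i // i ∈ fracRows γ} ≃ {j // j ∈ fracCols γ}) := fun σ hσ =>
    { toFun := fun i => ⟨σ i.1, hmemC σ hσ i.1 i.2⟩
      invFun := fun j => ⟨σ.symm j.1, hmemR σ hσ j.1 j.2⟩
      left_inv := fun i => Subtype.ext (σ.symm_apply_apply i.1)
      right_inv := fun j => Subtype.ext (σ.apply_symm_apply j.1) }
  unfold permOn
  rw [Finset.mul_sum]
  rw [← Finset.sum_filter_of_ne
    (p := fun e : ({i // i ∈ fracRows γ} ≃ {j // j ∈ fracCols γ}) =>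
      ∀ i : {i // i ∈ fracRows γ}, 0 < γ i.1 (e i).1)
    (fun e _ hne => ?_)]
  · refine Finset.sum_bij' (fun e _ => toP e) (fun σ hσ' => mkE σ (Finset.mem_filter.1 hσ').2)
      ?_ ?_ ?_ ?_ ?_
    · intro e he
      refine Finset.mem_filter.2 ⟨Finset.mem_univ _, fun i => ?_⟩
      by_cases hi : i ∈ fracRows γ
      · rw [htoP_mem e i hi]
        exact (Finset.mem_filter.1 he).2 ⟨i, hi⟩
      · rw [htoP_not e i hi, hg ⟨i, hi⟩]
        norm_num
    · intro σ hσ'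
      refine Finset.mem_filter.2 ⟨Finset.mem_univ _, fun i => ?_⟩
      exact (Finset.mem_filter.1 hσ').2 i.1
    · intro e he
      apply Equiv.ext
      intro i
      apply Subtype.ext
      exact htoP_mem e i.1 i.2
    · intro σ hσ'
      have hσ := (Finset.mem_filter.1 hσ').2
      apply Equiv.ext
      intro i
      by_cases hi : i ∈ fracRows γ
      · rw [htoP_mem _ i hi]
        rfl
      · rw [htoP_not _ i hi]
        have h1 : γ i (σ i) = 1 := honer _ _ hi (hσ i)
        rcases eq_or_ne (g ⟨i, hi⟩) (σ i) with h | h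
        · exact h
        · exact absurd (hg ⟨i, hi⟩) (by rw [row_unique hd h1 h]; norm_num)
    · intro e he
      have hσ : ∀ i, 0 < γ i (toP e i) := by
        intro i
        by_cases hi : i ∈ fracRows γ
        · rw [htoP_mem e i hi]
          exact (Finset.mem_filter.1 he).2 ⟨i, hi⟩
        · rw [htoP_not e i hi, hg ⟨i, hi⟩]
          norm_num
      rw [← term_eq hn hM hγ (toP e) hσ]
      congr 1
      refine Finset.prod_congr rfl fun i _ => ?_
      rw [htoP_mem e i.1 i.2]
  · by_contra hP
    simp only [not_forall, not_lt] at hP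
    obtain ⟨i, hi⟩ := hP
    have hz : γ i.1 (e i).1 = 0 := le_antisymm hi (hd.1 _ _)
    have hzero : gammaHat γ i.1 (e i).1 = 0 := by
      unfold gammaHat
      rw [hz]
      simp
    exact hne (by rw [Finset.prod_eq_zero (Finset.mem_univ i) hzero, mul_zero])
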